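/- Fix p ∈ (0,1). Consider minimizing kθ + (1−θ) over pairs (k,θ) ∈ [0,1) × [0,1] satisfying the constraint k + (1−k)h(θ) = p. The minimum is attained uniquely at k = 0 and θ = h⁻¹(p); equivalently, θ(1−k) is maximized uniquely at k = 0. -/

import Mathlib

/-- `h(θ) = (1−θ)(1−log(1−θ))`, with `h 1 = 0` automatic since `Real.log 0 = 0`. -/
noncomputable def h (θ : ℝ) : ℝ := (1 - θ) * (1 - Real.log (1 - θ))

lemma hF_deriv (x : ℝ) (hx : x ≠ 0) :
    HasDerivAt (fun x : ℝ => x - x * Real.log x) (-Real.log x) x := by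
  have : HasDerivAt (fun x : ℝ => x - x * Real.log x) (1 - (Real.log x + 1)) x :=
    (hasDerivAt_id x).sub (Real.hasDerivAt_mul_log hx)
  convert this using 1
  ring

lemma contF : Continuous fun x : ℝ => x - x * Real.log x :=
  continuous_id.sub Real.continuous_mul_log

lemma h_eq : h = fun t : ℝ => (1 - t) - (1 - t) * Real.log (1 - t) := by
  funext t; unfold h; ring

lemma cont_h : Continuous h := by
  rw [h_eq]
  exact contF.comp (continuous_const.sub continuous_id)

lemma h_hasDeriv (t : ℝ) (ht : t < 1) :
    HasDerivAt h (Real.log (1 - t)) t := by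
  have h1 : HasDerivAt (fun t : ℝ => 1 - t) (-1) t := (hasDerivAt_id t).const_sub 1
  have h2 := (hF_deriv (1 - t) (by linarith)).comp t h1
  have h3 : -Real.log (1 - t) * -1 = Real.log (1 - t) := by ring
  rw [h3] at h2
  rw [h_eq]
  exact h2

lemma strictAntiOn_h : StrictAntiOn h (Set.Icc (0:ℝ) 1) := by
  have hF : StrictMonoOn (fun x : ℝ => x - x * Real.log x) (Set.Icc (0:ℝ) 1) := by
    apply strictMonoOn_of_deriv_pos (convex_Icc 0 1) contF.continuousOn
    intro x hx
    rw [interior_Icc] at hx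
    rw [(hF_deriv x hx.1.ne').deriv]
    have := Real.log_neg hx.1 hx.2
    linarith
  intro a ha b hb hab
  have h1 : (1 - b) ∈ Set.Icc (0:ℝ) 1 := ⟨by linarith [hb.2], by linarith [hb.1]⟩
  have h2 : (1 - a) ∈ Set.Icc (0:ℝ) 1 := ⟨by linarith [ha.2], by linarith [ha.1]⟩
  have := hF h1 h2 (by linarith)
  rw [h_eq]
  simpa using this

lemma h_zero : h 0 = 1 := by simp [h]

lemma key (k : ℝ) (hk : k ∈ Set.Ioo (0:ℝ) 1) (θ : ℝ) (hθ : θ ∈ Set.Ioc (0:ℝ) 1) :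
    k + (1 - k) * h θ < h ((1 - k) * θ) := by
  obtain ⟨hk0, hk1⟩ := hk
  obtain ⟨hθ0, hθ1⟩ := hθ
  set g : ℝ → ℝ := fun t => h ((1 - k) * t) - (1 - k) * h t with hg
  have hgmono : StrictMonoOn g (Set.Icc (0:ℝ) 1) := by
    apply strictMonoOn_of_deriv_pos (convex_Icc 0 1)
    · exact ((cont_h.comp (continuous_const.mul continuous_id)).sub
        (continuous_const.mul cont_h)).continuousOn
    · intro t ht
      rw [interior_Icc] at ht
      obtain ⟨ht0, ht1⟩ := ht
      have hkt : (1 - k) * t < 1 := by nlinarith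
      have d1 : HasDerivAt (fun t : ℝ => h ((1 - k) * t))
          (Real.log (1 - (1 - k) * t) * (1 - k)) t := by
        have hinner : HasDerivAt (fun t : ℝ => (1 - k) * t) (1 - k) t := by
          simpa using (hasDerivAt_id t).const_mul (1 - k)
        exact (h_hasDeriv ((1 - k) * t) hkt).comp t hinner
      have d2 : HasDerivAt (fun t : ℝ => (1 - k) * h t)
          ((1 - k) * Real.log (1 - t)) t := (h_hasDeriv t ht1).const_mul (1 - k)
      have dg : HasDerivAt g
          (Real.log (1 - (1 - k) * t) * (1 - k) - (1 - k) * Real.log (1 - t)) t :=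
        d1.sub d2
      rw [dg.deriv]
      have hlog : Real.log (1 - t) < Real.log (1 - (1 - k) * t) := by
        apply Real.log_lt_log (by linarith)
        nlinarith
      nlinarith
  have hmem0 : (0:ℝ) ∈ Set.Icc (0:ℝ) 1 := ⟨le_refl _, zero_le_one⟩
  have hmemθ : θ ∈ Set.Icc (0:ℝ) 1 := ⟨hθ0.le, hθ1⟩
  have := hgmono hmem0 hmemθ hθ0
  have hg0 : g 0 = k := by simp [hg, h_zero]
  rw [hg0] at this
  simp only [hg] at this
  linarith

/-- one-buyer (Roesler–Szentes) reduced problem.  For `p ∈ (0,1)`,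
the minimum of `kθ + (1−θ)` over `(k,θ) ∈ [0,1) × [0,1]` with `k + (1−k)h(θ) = p`
is attained uniquely at `k = 0`, `θ = h⁻¹(p)`; equivalently `θ(1−k)` is maximized
uniquely at `k = 0`. -/
theorem stmt6 (p : ℝ) (hp : p ∈ Set.Ioo (0:ℝ) 1)
    (θp : ℝ) (hθp : θp ∈ Set.Icc (0:ℝ) 1) (hθph : h θp = p) :
    ∀ k ∈ Set.Ico (0:ℝ) 1, ∀ θ ∈ Set.Icc (0:ℝ) 1,
      k + (1 - k) * h θ = p →
      (0 * θp + (1 - θp) ≤ k * θ + (1 - θ) ∧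
        ((k, θ) ≠ (0, θp) → 0 * θp + (1 - θp) < k * θ + (1 - θ))) ∧
      (θ * (1 - k) ≤ θp * (1 - 0) ∧
        ((k, θ) ≠ (0, θp) → θ * (1 - k) < θp * (1 - 0))) := by
  intro k hk θ hθ hcon
  obtain ⟨hk0, hk1⟩ := hk
  obtain ⟨hθ0, hθ1⟩ := hθ
  have hθpos : 0 < θ := by
    rcases lt_or_eq_of_le hθ0 with h' | h'
    · exact h'
    · exfalso
      rw [← h'] at hcon
      rw [h_zero] at hcon
      have : p = 1 := by linarith
      linarith [hp.2]
  rcases eq_or_lt_of_le hk0 with hke | hkpos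
  · -- k = 0
    have hk' : k = 0 := hke.symm
    subst hk'
    have hhθ : h θ = p := by linarith
    have : θ = θp := by
      apply strictAntiOn_h.injOn ⟨hθ0, hθ1⟩ hθp
      rw [hhθ, hθph]
    subst this
    constructor
    · refine ⟨by linarith, fun hne => absurd rfl hne⟩
    · refine ⟨by linarith, fun hne => absurd rfl hne⟩
  · -- k > 0
    have hkey := key k ⟨hkpos, hk1⟩ θ ⟨hθpos, hθ1⟩
    rw [hcon, ← hθph] at hkey
    have hmem1 : (1 - k) * θ ∈ Set.Icc (0:ℝ) 1 := by
      constructor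
      · exact mul_nonneg (by linarith) hθ0
      · nlinarith
    have hlt : (1 - k) * θ < θp := by
      by_contra hle
      push_neg at hle
      rcases eq_or_lt_of_le hle with he | hl
      · rw [he] at hkey; linarith
      · have := strictAntiOn_h hθp hmem1 hl
        linarith
    have hstrict1 : 0 * θp + (1 - θp) < k * θ + (1 - θ) := by nlinarith
    have hstrict2 : θ * (1 - k) < θp * (1 - 0) := by nlinarith
    exact ⟨⟨hstrict1.le, fun _ => hstrict1⟩, ⟨hstrict2.le, fun _ => hstrict2⟩⟩
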